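/- (Slutsky, additive part) Let (Ω, F, P) be a probability space, let X_m, Y_m, X : Ω → ℝ be measurable with each X_m and X having well-defined laws, let c ∈ ℝ, and suppose: (i) X_m converges in distribution to X, i.e., for every bounded continuous f : ℝ → ℝ, E[f(X_m)] → E[f(X)]; and (ii) Y_m converges in probability to c, i.e., for every ε > 0, P(|Y_m − c| ≥ ε) → 0. Then X_m + Y_m converges in distribution to X + c: for every bounded continuous f : ℝ → ℝ, E[f(X_m + Y_m)] → E[f(X + c)]. -/

import Mathlib

open MeasureTheory Filter

lemma slutsky_aux_integrable {Ω : Type*} [MeasurableSpace Ω] (P : Measure Ω)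
    [IsProbabilityMeasure P] (g : Ω → ℝ) (hg : Measurable g) (D : ℝ)
    (h : ∀ ω, |g ω| ≤ D) : Integrable g P :=
  ⟨hg.aestronglyMeasurable, MeasureTheory.HasFiniteIntegral.of_bounded (C := D)
    (Filter.Eventually.of_forall (fun ω => by simpa using h ω))⟩

lemma slutsky_aux_abs_sub {u v D : ℝ} (h1 : |u| ≤ D) (h2 : |v| ≤ D) :
    |u - v| ≤ 2 * D := by
  rw [abs_le] at h1 h2 ⊢; constructor <;> linarith [h1.1, h1.2, h2.1, h2.2]

theorem slutsky_add {Ω : Type*} [MeasurableSpace Ω]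
    (P : Measure Ω) [IsProbabilityMeasure P]
    (X : ℕ → Ω → ℝ) (Y : ℕ → Ω → ℝ) (X₀ : Ω → ℝ) (c : ℝ)
    (hX : ∀ m, Measurable (X m)) (hY : ∀ m, Measurable (Y m))
    (hX₀ : Measurable X₀)
    (hconv : ∀ f : ℝ → ℝ, Continuous f → (∃ C, ∀ t, |f t| ≤ C) →
        Tendsto (fun m => ∫ ω, f (X m ω) ∂P) atTop (nhds (∫ ω, f (X₀ ω) ∂P)))
    (hprob : ∀ ε > (0 : ℝ),
        Tendsto (fun m => P {ω | ε ≤ |Y m ω - c|}) atTop (nhds 0)) :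
    ∀ f : ℝ → ℝ, Continuous f → (∃ C, ∀ t, |f t| ≤ C) →
      Tendsto (fun m => ∫ ω, f (X m ω + Y m ω) ∂P) atTop
        (nhds (∫ ω, f (X₀ ω + c) ∂P)) := by
  rintro f hf ⟨C, hC⟩
  have hC0 : 0 ≤ C := le_trans (abs_nonneg _) (hC 0)
  set D : ℝ := C + 1 with hDdef
  have hD : 0 < D := by rw [hDdef]; linarith
  have hfD : ∀ t, |f t| ≤ D := fun t => le_trans (hC t) (by rw [hDdef]; linarith)
  -- convergence of the shifted integrals
  have hb : Tendsto (fun m => ∫ ω, f (X m ω + c) ∂P) atTop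
      (nhds (∫ ω, f (X₀ ω + c) ∂P)) :=
    hconv (fun t => f (t + c)) (hf.comp (continuous_id.add continuous_const))
      ⟨C, fun t => hC _⟩
  suffices hd : Tendsto (fun m => (∫ ω, f (X m ω + Y m ω) ∂P) - ∫ ω, f (X m ω + c) ∂P)
      atTop (nhds 0) by
    have := hd.add hb
    simpa using this
  rw [NormedAddCommGroup.tendsto_nhds_zero]
  intro ε hε
  have hε8D : 0 < ε / (8 * D) := by positivity
  -- choose the tightness bound K
  obtain ⟨K, hK⟩ : ∃ K : ℕ, P {ω | (K : ℝ) ≤ |X₀ ω|} < ENNReal.ofReal (ε / (8 * D)) := by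
    have hmeas : ∀ n : ℕ, MeasurableSet {ω | (n : ℝ) ≤ |X₀ ω|} :=
      fun n => measurableSet_le measurable_const hX₀.abs
    have hanti : Antitone (fun n : ℕ => {ω | (n : ℝ) ≤ |X₀ ω|}) := by
      intro a b hab ω hω
      simp only [Set.mem_setOf_eq] at hω ⊢
      exact le_trans (Nat.cast_le.mpr hab) hω
    have htend := MeasureTheory.tendsto_measure_iInter_atTop
      (μ := P) (fun n => (hmeas n).nullMeasurableSet) hanti ⟨0, measure_ne_top _ _⟩
    have hempty : (⋂ n : ℕ, {ω | (n : ℝ) ≤ |X₀ ω|}) = ∅ := by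
      ext ω
      simp only [Set.mem_iInter, Set.mem_setOf_eq, Set.mem_empty_iff_false, iff_false]
      push_neg
      obtain ⟨n, hn⟩ := exists_nat_gt (|X₀ ω|)
      exact ⟨n, hn⟩
    rw [hempty, measure_empty] at htend
    have hpos : (0 : ENNReal) < ENNReal.ofReal (ε / (8 * D)) := ENNReal.ofReal_pos.mpr hε8D
    exact (htend.eventually_lt_const hpos).exists
  -- the cutoff function
  set φ : ℝ → ℝ := fun t => max 0 (min (|t| - K) 1) with hφdef
  have hφcont : Continuous φ :=
    continuous_const.max ((continuous_abs.sub continuous_const).min continuous_const)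
  have hφ01 : ∀ t, 0 ≤ φ t ∧ φ t ≤ 1 :=
    fun t => ⟨le_max_left _ _, max_le (by norm_num) (min_le_right _ _)⟩
  have hφbd : ∀ t, |φ t| ≤ 1 := fun t => abs_le.mpr ⟨by linarith [(hφ01 t).1], (hφ01 t).2⟩
  have hφconv := hconv φ hφcont ⟨1, hφbd⟩
  have hKmeas : MeasurableSet {ω | (K : ℝ) ≤ |X₀ ω|} :=
    measurableSet_le measurable_const hX₀.abs
  have h₀ : ∫ ω, φ (X₀ ω) ∂P < ε / (8 * D) := by
    have hpt : ∀ ω, φ (X₀ ω) ≤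
        Set.indicator {ω | (K : ℝ) ≤ |X₀ ω|} (fun _ => (1 : ℝ)) ω := by
      intro ω
      by_cases h : ω ∈ {ω | (K : ℝ) ≤ |X₀ ω|}
      · rw [Set.indicator_of_mem h]; exact (hφ01 _).2
      · rw [Set.indicator_of_notMem h]
        simp only [Set.mem_setOf_eq, not_le] at h
        exact max_le le_rfl (le_trans (min_le_left _ _) (by linarith))
    have hle : ∫ ω, φ (X₀ ω) ∂P ≤ (P {ω | (K : ℝ) ≤ |X₀ ω|}).toReal := by
      calc ∫ ω, φ (X₀ ω) ∂P
          ≤ ∫ ω, Set.indicator {ω | (K : ℝ) ≤ |X₀ ω|} (fun _ => (1 : ℝ)) ω ∂P :=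
            integral_mono
              (slutsky_aux_integrable P _ (hφcont.measurable.comp hX₀) 1 (fun ω => hφbd _))
              ((integrable_const (1 : ℝ)).indicator hKmeas) hpt
        _ = (P {ω | (K : ℝ) ≤ |X₀ ω|}).toReal := by
            rw [integral_indicator_const _ hKmeas]; simp; rfl
    have := (ENNReal.lt_ofReal_iff_toReal_lt (measure_ne_top _ _)).mp hK
    linarith
  -- eventual bound on P(|X_m| ≥ K+1)
  have hEvB : ∀ᶠ m in atTop, (P {ω | (K : ℝ) + 1 ≤ |X m ω|}).toReal < ε / (8 * D) := by
    filter_upwards [hφconv.eventually_lt_const h₀] with m hm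
    have hBmeas : MeasurableSet {ω | (K : ℝ) + 1 ≤ |X m ω|} :=
      measurableSet_le measurable_const (hX m).abs
    have hpt : ∀ ω, Set.indicator {ω | (K : ℝ) + 1 ≤ |X m ω|} (fun _ => (1 : ℝ)) ω
        ≤ φ (X m ω) := by
      intro ω
      by_cases h : ω ∈ {ω | (K : ℝ) + 1 ≤ |X m ω|}
      · rw [Set.indicator_of_mem h]
        have h' : (K : ℝ) + 1 ≤ |X m ω| := h
        have hmin : min (|X m ω| - K) 1 = 1 := min_eq_right (by linarith)
        calc (1 : ℝ) = min (|X m ω| - K) 1 := hmin.symm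
          _ ≤ φ (X m ω) := le_max_right _ _
      · rw [Set.indicator_of_notMem h]; exact (hφ01 _).1
    have hle : (P {ω | (K : ℝ) + 1 ≤ |X m ω|}).toReal ≤ ∫ ω, φ (X m ω) ∂P := by
      calc (P {ω | (K : ℝ) + 1 ≤ |X m ω|}).toReal
          = ∫ ω, Set.indicator {ω | (K : ℝ) + 1 ≤ |X m ω|} (fun _ => (1 : ℝ)) ω ∂P := by
            rw [integral_indicator_const _ hBmeas]; simp; rfl
        _ ≤ ∫ ω, φ (X m ω) ∂P :=
            integral_mono ((integrable_const (1 : ℝ)).indicator hBmeas)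
              (slutsky_aux_integrable P _ (hφcont.measurable.comp (hX m)) 1 (fun ω => hφbd _))
              hpt
    linarith
  -- uniform continuity on a compact set and the δ from convergence in probability
  set M : ℝ := (K : ℝ) + 2 + |c| with hMdef
  have huc := (isCompact_Icc (a := -M) (b := M)).uniformContinuousOn_of_continuous
    hf.continuousOn
  obtain ⟨δ₀, hδ₀, hδprop⟩ := Metric.uniformContinuousOn_iff.mp huc (ε / 4) (by positivity)
  set δ : ℝ := min δ₀ 1 with hδdef
  have hδpos : 0 < δ := lt_min hδ₀ one_pos
  have hδ1 : δ ≤ 1 := min_le_right _ _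
  have hδδ₀ : δ ≤ δ₀ := min_le_left _ _
  have hEvA : ∀ᶠ m in atTop, (P {ω | δ ≤ |Y m ω - c|}).toReal < ε / (8 * D) := by
    have hof : (0 : ENNReal) < ENNReal.ofReal (ε / (8 * D)) := ENNReal.ofReal_pos.mpr hε8D
    filter_upwards [(hprob δ hδpos).eventually_lt_const hof] with m hm
    exact (ENNReal.lt_ofReal_iff_toReal_lt (measure_ne_top _ _)).mp hm
  -- main estimate
  filter_upwards [hEvA, hEvB] with m hA hB
  set A : Set Ω := {ω | δ ≤ |Y m ω - c|} with hAdef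
  set B : Set Ω := {ω | (K : ℝ) + 1 ≤ |X m ω|} with hBdef
  have hAmeas : MeasurableSet A :=
    measurableSet_le measurable_const ((hY m).sub measurable_const).abs
  have hBmeas : MeasurableSet B := measurableSet_le measurable_const (hX m).abs
  have hpt : ∀ ω, |f (X m ω + Y m ω) - f (X m ω + c)| ≤
      ε / 4 + (A.indicator (fun _ => 2 * D) ω + B.indicator (fun _ => 2 * D) ω) := by
    intro ω
    have hAnn : 0 ≤ A.indicator (fun _ => 2 * D) ω :=
      Set.indicator_nonneg (fun _ _ => by positivity) ω
    have hBnn : 0 ≤ B.indicator (fun _ => 2 * D) ω :=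
      Set.indicator_nonneg (fun _ _ => by positivity) ω
    have h2D : |f (X m ω + Y m ω) - f (X m ω + c)| ≤ 2 * D :=
      slutsky_aux_abs_sub (hfD _) (hfD _)
    by_cases hBω : ω ∈ B
    · rw [Set.indicator_of_mem hBω]
      linarith
    · by_cases hAω : ω ∈ A
      · rw [Set.indicator_of_mem hAω]
        linarith
      · simp only [hAdef, hBdef, Set.mem_setOf_eq, not_le] at hAω hBω
        have hcabs : |c| ≤ |c| := le_rfl
        have hx1 : X m ω + c ∈ Set.Icc (-M) M := by
          rw [Set.mem_Icc, ← abs_le]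
          calc |X m ω + c| ≤ |X m ω| + |c| := abs_add_le _ _
            _ ≤ M := by rw [hMdef]; linarith
        have hx2 : X m ω + Y m ω ∈ Set.Icc (-M) M := by
          rw [Set.mem_Icc, ← abs_le]
          have : X m ω + Y m ω = (X m ω + c) + (Y m ω - c) := by ring
          rw [this]
          calc |(X m ω + c) + (Y m ω - c)| ≤ |X m ω + c| + |Y m ω - c| := abs_add_le _ _
            _ ≤ (|X m ω| + |c|) + |Y m ω - c| := by linarith [abs_add_le (X m ω) c]
            _ ≤ M := by rw [hMdef]; linarith
        have hdist : dist (X m ω + Y m ω) (X m ω + c) < δ₀ := by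
          rw [Real.dist_eq]
          have : X m ω + Y m ω - (X m ω + c) = Y m ω - c := by ring
          rw [this]
          linarith
        have := hδprop _ hx2 _ hx1 hdist
        rw [Real.dist_eq] at this
        linarith
  have hint1 : Integrable (fun ω => f (X m ω + Y m ω)) P :=
    slutsky_aux_integrable P _ (hf.measurable.comp ((hX m).add (hY m))) D (fun ω => hfD _)
  have hint2 : Integrable (fun ω => f (X m ω + c)) P :=
    slutsky_aux_integrable P _ (hf.measurable.comp ((hX m).add measurable_const)) D
      (fun ω => hfD _)
  rw [Real.norm_eq_abs, ← integral_sub hint1 hint2]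
  have h1 : |∫ ω, (f (X m ω + Y m ω) - f (X m ω + c)) ∂P|
      ≤ ∫ ω, |f (X m ω + Y m ω) - f (X m ω + c)| ∂P := by
    simpa [Real.norm_eq_abs] using
      MeasureTheory.norm_integral_le_integral_norm (μ := P)
        (fun ω => f (X m ω + Y m ω) - f (X m ω + c))
  have h2 : ∫ ω, |f (X m ω + Y m ω) - f (X m ω + c)| ∂P ≤
      ε / 4 + (2 * D * (P A).toReal + 2 * D * (P B).toReal) := by
    have hIA : Integrable (fun ω => A.indicator (fun _ => 2 * D) ω) P :=
      (integrable_const _).indicator hAmeas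
    have hIB : Integrable (fun ω => B.indicator (fun _ => 2 * D) ω) P :=
      (integrable_const _).indicator hBmeas
    have hIAB : Integrable (fun ω => A.indicator (fun _ => 2 * D) ω
        + B.indicator (fun _ => 2 * D) ω) P := hIA.add hIB
    have hR : Integrable (fun ω => ε / 4 +
        (A.indicator (fun _ => 2 * D) ω + B.indicator (fun _ => 2 * D) ω)) P :=
      (integrable_const _).add hIAB
    have hL : Integrable (fun ω => |f (X m ω + Y m ω) - f (X m ω + c)|) P :=
      (hint1.sub hint2).abs
    calc ∫ ω, |f (X m ω + Y m ω) - f (X m ω + c)| ∂P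
        ≤ ∫ ω, (ε / 4 + (A.indicator (fun _ => 2 * D) ω
            + B.indicator (fun _ => 2 * D) ω)) ∂P := integral_mono hL hR hpt
      _ = ε / 4 + (2 * D * (P A).toReal + 2 * D * (P B).toReal) := by
          rw [integral_add (integrable_const _) hIAB, integral_add hIA hIB,
            integral_indicator_const _ hAmeas, integral_indicator_const _ hBmeas,
            integral_const]
          simp [measure_univ, mul_comm]; rfl
  have hA' : 2 * D * (P A).toReal < ε / 4 := by
    calc 2 * D * (P A).toReal < 2 * D * (ε / (8 * D)) :=
          mul_lt_mul_of_pos_left hA (by positivity)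
      _ = ε / 4 := by field_simp; ring
  have hB' : 2 * D * (P B).toReal < ε / 4 := by
    calc 2 * D * (P B).toReal < 2 * D * (ε / (8 * D)) :=
          mul_lt_mul_of_pos_left hB (by positivity)
      _ = ε / 4 := by field_simp; ring
  have : |∫ ω, (f (X m ω + Y m ω) - f (X m ω + c)) ∂P| < ε := by linarith
  exact this
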